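/- Let γ ⊂ ℝ³ be a steepest descent curve in arclength parametrization x(s). If x'(s) exists at some s, then the tangent cone to co(γ(s)) at x(s) cannot be an orthant (a rotation of the nonnegative orthant translated to x(s)). -/

import Mathlib

open RealInnerProductSpace Set MeasureTheory Filter Topology

set_option maxHeartbeats 1000000

noncomputable section SDCAux

abbrev E3 := EuclideanSpace ℝ (Fin 3)

lemma sdc_expand {w : Fin 3 → E3} (u : E3) (a b c : ℝ) :
    ⟪u, a • w 0 + b • w 1 + c • w 2⟫ = a * ⟪u, w 0⟫ + b * ⟪u, w 1⟫ + c * ⟪u, w 2⟫ := by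
  rw [inner_add_right, inner_add_right, real_inner_smul_right, real_inner_smul_right,
    real_inner_smul_right]

lemma sdc_wnorm {w : Fin 3 → E3}
    (hw : ∀ i j, ⟪w i, w j⟫ = if i = j then (1 : ℝ) else 0) (i : Fin 3) :
    ‖w i‖ = 1 := by
  have h := hw i i
  rw [if_pos rfl] at h
  have h2 : ‖w i‖ ^ 2 = 1 := by rw [← real_inner_self_eq_norm_sq, h]
  nlinarith [norm_nonneg (w i)]

lemma sdc_wcoord {w : Fin 3 → E3}
    (hw : ∀ i j, ⟪w i, w j⟫ = if i = j then (1 : ℝ) else 0) (a b c : ℝ) :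
    ⟪a • w 0 + b • w 1 + c • w 2, w 0⟫ = a ∧
    ⟪a • w 0 + b • w 1 + c • w 2, w 1⟫ = b ∧
    ⟪a • w 0 + b • w 1 + c • w 2, w 2⟫ = c := by
  have h00 := hw 0 0; have h01 := hw 0 1; have h02 := hw 0 2
  have h10 := hw 1 0; have h11 := hw 1 1; have h12 := hw 1 2
  have h20 := hw 2 0; have h21 := hw 2 1; have h22 := hw 2 2
  rw [if_pos rfl] at h00 h11 h22
  rw [if_neg (by decide)] at h01 h02 h10 h12 h20 h21
  refine ⟨?_, ?_, ?_⟩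
  · rw [inner_add_left, inner_add_left, real_inner_smul_left, real_inner_smul_left,
      real_inner_smul_left, h00, h10, h20]; ring
  · rw [inner_add_left, inner_add_left, real_inner_smul_left, real_inner_smul_left,
      real_inner_smul_left, h01, h11, h21]; ring
  · rw [inner_add_left, inner_add_left, real_inner_smul_left, real_inner_smul_left,
      real_inner_smul_left, h02, h12, h22]; ring

lemma sdc_coord_nonneg {w : Fin 3 → E3}
    (hw : ∀ i j, ⟪w i, w j⟫ = if i = j then (1 : ℝ) else 0) {z : E3}
    (hz : ∃ a b c : ℝ, 0 ≤ a ∧ 0 ≤ b ∧ 0 ≤ c ∧ z = a • w 0 + b • w 1 + c • w 2) :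
    0 ≤ ⟪z, w 0⟫ ∧ 0 ≤ ⟪z, w 1⟫ ∧ 0 ≤ ⟪z, w 2⟫ := by
  obtain ⟨a, b, c, ha, hb, hc, rfl⟩ := hz
  obtain ⟨e0, e1, e2⟩ := sdc_wcoord hw a b c
  refine ⟨?_, ?_, ?_⟩
  · rw [e0]; exact ha
  · rw [e1]; exact hb
  · rw [e2]; exact hc

lemma sdc_norm_le_coordsum {w : Fin 3 → E3}
    (hw : ∀ i j, ⟪w i, w j⟫ = if i = j then (1 : ℝ) else 0) {z : E3}
    (hz : ∃ a b c : ℝ, 0 ≤ a ∧ 0 ≤ b ∧ 0 ≤ c ∧ z = a • w 0 + b • w 1 + c • w 2) :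
    ‖z‖ ≤ ⟪z, w 0⟫ + ⟪z, w 1⟫ + ⟪z, w 2⟫ := by
  obtain ⟨a, b, c, ha, hb, hc, rfl⟩ := hz
  obtain ⟨e0, e1, e2⟩ := sdc_wcoord hw a b c
  rw [e0, e1, e2]
  have hzz : ⟪a • w 0 + b • w 1 + c • w 2, a • w 0 + b • w 1 + c • w 2⟫
      = a * a + b * b + c * c := by
    rw [sdc_expand _ a b c, e0, e1, e2]
  have hnorm : ‖a • w 0 + b • w 1 + c • w 2‖ ^ 2 = a * a + b * b + c * c := by
    rw [← real_inner_self_eq_norm_sq, hzz]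
  nlinarith [norm_nonneg (a • w 0 + b • w 1 + c • w 2), mul_nonneg ha hb, mul_nonneg hb hc,
    mul_nonneg ha hc]

lemma sdc_parseval {w : Fin 3 → E3}
    (hw : ∀ i j, ⟪w i, w j⟫ = if i = j then (1 : ℝ) else 0) (y : E3) :
    ‖y‖ ^ 2 = ⟪y, w 0⟫ ^ 2 + ⟪y, w 1⟫ ^ 2 + ⟪y, w 2⟫ ^ 2 := by
  have horth : Orthonormal ℝ w := orthonormal_iff_ite.mpr hw
  have hcard : Fintype.card (Fin 3) = Module.finrank ℝ E3 := by
    rw [finrank_euclideanSpace_fin]; rfl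
  have hspan : ⊤ ≤ Submodule.span ℝ (Set.range w) := by
    rw [horth.linearIndependent.span_eq_top_of_card_eq_finrank hcard]
  let B : OrthonormalBasis (Fin 3) ℝ E3 := OrthonormalBasis.mk horth hspan
  have h := B.sum_inner_mul_inner y y
  rw [Fin.sum_univ_three] at h
  have hBi : ∀ i : Fin 3, B i = w i := fun i => by
    simp [B, OrthonormalBasis.coe_mk]
  rw [hBi 0, hBi 1, hBi 2] at h
  rw [← real_inner_self_eq_norm_sq, ← h]
  have c0 := real_inner_comm y (w 0)
  have c1 := real_inner_comm y (w 1)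
  have c2 := real_inner_comm y (w 2)
  rw [c0, c1, c2]; ring

lemma sdc_sum_coord_neg {c0 c1 c2 : ℝ} (h : c0 ^ 2 + c1 ^ 2 + c2 ^ 2 = 1)
    (h0 : c0 ≤ 1 / 12) (h1 : c1 ≤ 1 / 12) (h2 : c2 ≤ 1 / 12) :
    c0 + c1 + c2 ≤ -(1 / 2) := by
  have b0 : -1 ≤ c0 := by nlinarith [sq_nonneg (c0 + 1), sq_nonneg c1, sq_nonneg c2]
  have b1 : -1 ≤ c1 := by nlinarith [sq_nonneg (c1 + 1), sq_nonneg c0, sq_nonneg c2]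
  have b2 : -1 ≤ c2 := by nlinarith [sq_nonneg (c2 + 1), sq_nonneg c0, sq_nonneg c1]
  have e0 : (c0 - 1 / 12) * (c0 + 1) ≤ 0 :=
    mul_nonpos_of_nonpos_of_nonneg (by linarith) (by linarith)
  have e1 : (c1 - 1 / 12) * (c1 + 1) ≤ 0 :=
    mul_nonpos_of_nonpos_of_nonneg (by linarith) (by linarith)
  have e2 : (c2 - 1 / 12) * (c2 + 1) ≤ 0 :=
    mul_nonpos_of_nonpos_of_nonneg (by linarith) (by linarith)
  nlinarith [e0, e1, e2]

lemma sdc_unit_eq {a b : E3} (ha : ‖a‖ = 1) (hb : ‖b‖ = 1) (h : 1 ≤ ⟪a, b⟫) : a = b := by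
  have hs : ‖a - b‖ ^ 2 = ‖a‖ ^ 2 - 2 * ⟪a, b⟫ + ‖b‖ ^ 2 := norm_sub_sq_real a b
  rw [ha, hb] at hs
  have h1 : ‖a - b‖ ^ 2 ≤ 0 := by linarith
  have hz : ‖a - b‖ = 0 := by nlinarith [norm_nonneg (a - b)]
  exact sub_eq_zero.mp (norm_eq_zero.mp hz)

lemma sdc_normalized_inner_ge {u wv : E3} (hu : u ≠ 0) {c : ℝ}
    (h : c * ‖u‖ ≤ ⟪u, wv⟫) : c ≤ ⟪‖u‖⁻¹ • u, wv⟫ := by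
  have hn : (0:ℝ) < ‖u‖ := norm_pos_iff.mpr hu
  rw [real_inner_smul_left, inv_mul_eq_div, le_div_iff₀ hn]
  linarith

lemma sdc_normalized_close {u wv : E3} (hu : u ≠ 0) (hwv : ‖wv‖ = 1) {δ : ℝ}
    (h : (1 - δ) * ‖u‖ ≤ ⟪u, wv⟫) : ‖‖u‖⁻¹ • u - wv‖ ^ 2 ≤ 2 * δ := by
  have hn : (0:ℝ) < ‖u‖ := norm_pos_iff.mpr hu
  have hnn : ‖‖u‖⁻¹ • u‖ = 1 := norm_smul_inv_norm (𝕜 := ℝ) hu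
  have hi : (1 - δ) ≤ ⟪‖u‖⁻¹ • u, wv⟫ := sdc_normalized_inner_ge hu h
  have hs : ‖‖u‖⁻¹ • u - wv‖ ^ 2
      = ‖‖u‖⁻¹ • u‖ ^ 2 - 2 * ⟪‖u‖⁻¹ • u, wv⟫ + ‖wv‖ ^ 2 := norm_sub_sq_real _ _
  rw [hnn, hwv] at hs
  nlinarith

end SDCAux
noncomputable section SDCAux2x


lemma sdc_acute {x : ℝ → E3} {L : ℝ}
    (hsd : ∀ t' ∈ Icc (0:ℝ) L, ∀ t'' ∈ Icc (0:ℝ) L, ∀ t''' ∈ Icc (0:ℝ) L,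
      t' ≤ t'' → t'' ≤ t''' → ‖x t' - x t''‖ ≤ ‖x t' - x t'''‖)
    {t1 t2 s : ℝ} (h0 : 0 ≤ t1) (h12 : t1 ≤ t2) (h2s : t2 ≤ s) (hsL : s ≤ L)
    (hne : x t2 ≠ x s) : 0 < ⟪x t1 - x s, x t2 - x s⟫ := by
  have m1 : t1 ∈ Icc (0:ℝ) L := ⟨h0, by linarith⟩
  have m2 : t2 ∈ Icc (0:ℝ) L := ⟨by linarith, by linarith⟩
  have m3 : s ∈ Icc (0:ℝ) L := ⟨by linarith, hsL⟩
  have h := hsd t1 m1 t2 m2 s m3 h12 h2s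
  have hsq : ‖x t1 - x t2‖ ^ 2 ≤ ‖x t1 - x s‖ ^ 2 :=
    pow_le_pow_left₀ (norm_nonneg _) h 2
  have key : x t1 - x t2 = (x t1 - x s) - (x t2 - x s) := by abel
  rw [key, norm_sub_sq_real] at hsq
  have hb : 0 < ‖x t2 - x s‖ ^ 2 :=
    pow_pos (norm_pos_iff.mpr (sub_ne_zero_of_ne hne)) 2
  linarith

lemma sdc_deriv_inner_nonneg {x : ℝ → E3} {L : ℝ}
    (hsd : ∀ t' ∈ Icc (0:ℝ) L, ∀ t'' ∈ Icc (0:ℝ) L, ∀ t''' ∈ Icc (0:ℝ) L,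
      t' ≤ t'' → t'' ≤ t''' → ‖x t' - x t''‖ ≤ ‖x t' - x t'''‖)
    {t σ s : ℝ} {d : E3}
    (h0 : 0 ≤ t) (htσ : t ≤ σ) (hσs : σ ≤ s) (hsL : s ≤ L)
    (hd : HasDerivWithinAt x d (Icc 0 L) σ) : 0 ≤ ⟪d, x σ - x t⟫ := by
  rcases eq_or_lt_of_le htσ with rfl | hlt
  · simp
  · have hdx : HasDerivWithinAt (fun ς => x ς - x t) d (Icc 0 L) σ := hd.sub_const _
    have hq : HasDerivWithinAt (fun ς => ⟪x ς - x t, x ς - x t⟫)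
        (⟪x σ - x t, d⟫ + ⟪d, x σ - x t⟫) (Icc 0 L) σ := hdx.inner ℝ hdx
    have hsub : Ico t σ ⊆ Icc (0:ℝ) L := fun y hy =>
      ⟨by linarith [hy.1], by linarith [hy.2]⟩
    have hq' := hq.mono hsub
    rw [hasDerivWithinAt_iff_tendsto_slope] at hq'
    have hdiff : Ico t σ \ {σ} = Ico t σ :=
      diff_singleton_eq_self (fun h => lt_irrefl σ h.2)
    rw [hdiff] at hq'
    haveI : (𝓝[Ico t σ] σ).NeBot := right_nhdsWithin_Ico_neBot hlt
    have hev : ∀ ς ∈ Ico t σ, 0 ≤ slope (fun ς => ⟪x ς - x t, x ς - x t⟫) σ ς := by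
      intro ς hς
      have hmono : ⟪x ς - x t, x ς - x t⟫ ≤ ⟪x σ - x t, x σ - x t⟫ := by
        have h1 := hsd t ⟨h0, by linarith⟩ ς ⟨by linarith [hς.1], by linarith [hς.2]⟩ σ
          ⟨by linarith, by linarith⟩ hς.1 (le_of_lt hς.2)
        have e1 : ⟪x ς - x t, x ς - x t⟫ = ‖x t - x ς‖ ^ 2 := by
          rw [real_inner_self_eq_norm_sq, norm_sub_rev]
        have e2 : ⟪x σ - x t, x σ - x t⟫ = ‖x t - x σ‖ ^ 2 := by
          rw [real_inner_self_eq_norm_sq, norm_sub_rev]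
        rw [e1, e2]
        exact pow_le_pow_left₀ (norm_nonneg _) h1 2
      rw [slope_def_field]
      refine div_nonneg_iff.mpr (Or.inr ⟨by linarith, by linarith [hς.2]⟩)
    have hD : 0 ≤ ⟪x σ - x t, d⟫ + ⟪d, x σ - x t⟫ :=
      ge_of_tendsto hq' (eventually_nhdsWithin_of_forall hev)
    have hcomm : ⟪x σ - x t, d⟫ = ⟪d, x σ - x t⟫ := real_inner_comm _ _
    linarith

lemma sdc_ne_endpoint {L : ℝ} {x xd : ℝ → E3}
    (harc : ∀ᵐ σ ∂(volume.restrict (Icc 0 L)),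
      HasDerivWithinAt x (xd σ) (Icc 0 L) σ ∧ ‖xd σ‖ = 1)
    (hsd : ∀ t' ∈ Icc (0:ℝ) L, ∀ t'' ∈ Icc (0:ℝ) L, ∀ t''' ∈ Icc (0:ℝ) L,
      t' ≤ t'' → t'' ≤ t''' → ‖x t' - x t''‖ ≤ ‖x t' - x t'''‖)
    {t s : ℝ} (h0 : 0 ≤ t) (hts : t < s) (hsL : s ≤ L) : x t ≠ x s := by
  intro he
  have hconst : ∀ τ ∈ Icc t s, x τ = x t := by
    intro τ hτ
    have h := hsd t ⟨h0, by linarith⟩ τ ⟨by linarith [hτ.1], by linarith [hτ.2]⟩ s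
      ⟨by linarith, hsL⟩ hτ.1 hτ.2
    rw [← he, sub_self, norm_zero] at h
    have := le_antisymm h (norm_nonneg _)
    have := norm_eq_zero.mp this
    have := sub_eq_zero.mp this
    exact this.symm
  obtain ⟨σ, hσIoo, hσd, hσn⟩ :
      ∃ σ, σ ∈ Ioo t s ∧ HasDerivWithinAt x (xd σ) (Icc 0 L) σ ∧ ‖xd σ‖ = 1 := by
    by_contra hc
    push_neg at hc
    have hsub : Ioo t s ⊆
        {σ | ¬(HasDerivWithinAt x (xd σ) (Icc 0 L) σ ∧ ‖xd σ‖ = 1)} := by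
      intro σ hσ hP
      exact hc σ hσ hP.1 hP.2
    have hnull := measure_mono_null hsub (ae_iff.mp harc)
    rw [Measure.restrict_apply measurableSet_Ioo] at hnull
    have hss : Ioo t s ∩ Icc 0 L = Ioo t s := by
      apply inter_eq_self_of_subset_left
      intro y hy
      exact ⟨by linarith [hy.1], by linarith [hy.2]⟩
    rw [hss, Real.volume_Ioo] at hnull
    rw [ENNReal.ofReal_eq_zero] at hnull
    linarith
  have hmem : σ ∈ Icc t s := ⟨le_of_lt hσIoo.1, le_of_lt hσIoo.2⟩
  have hderiv1 : HasDerivWithinAt x (xd σ) (Icc t s) σ :=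
    hσd.mono (fun y hy => ⟨by linarith [hy.1], by linarith [hy.2]⟩)
  have hderiv0 : HasDerivWithinAt x 0 (Icc t s) σ := by
    have hC : HasDerivWithinAt (fun _ : ℝ => x t) 0 (Icc t s) σ :=
      hasDerivWithinAt_const σ _ (x t)
    exact hC.congr (fun y hy => hconst y hy) (hconst σ hmem)
  have huniq := UniqueDiffWithinAt.eq_deriv (Icc t s) (uniqueDiffOn_Icc hts σ hmem)
    hderiv1 hderiv0
  rw [huniq] at hσn
  simp at hσn

end SDCAux2x

lemma sdc_pigeonhole {x : ℝ → E3} {s : ℝ} {w : Fin 3 → E3}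
    (hw : ∀ i j, ⟪w i, w j⟫ = if i = j then (1 : ℝ) else 0)
    (Heq : closure (⋃ y ∈ convexHull ℝ (x '' Icc 0 s),
        {z : E3 | ∃ r : ℝ, 0 ≤ r ∧ z = r • (y - x s)})
      = {z : E3 | ∃ a b c : ℝ, 0 ≤ a ∧ 0 ≤ b ∧ 0 ≤ c ∧
          z = a • w 0 + b • w 1 + c • w 2})
    (i : Fin 3) {δ : ℝ} (hδ0 : 0 < δ) (hδ1 : δ ≤ 1 / 5) :
    ∃ t ∈ Icc (0:ℝ) s, x t ≠ x s ∧
      (1 - 5 * δ) * ‖x t - x s‖ ≤ ⟪x t - x s, w i⟫ := by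
  set U : Set E3 := ⋃ y ∈ convexHull ℝ (x '' Icc 0 s),
    {z : E3 | ∃ r : ℝ, 0 ≤ r ∧ z = r • (y - x s)} with hUdef
  have hsec : ∀ t ∈ Icc (0:ℝ) s, ∃ a b c : ℝ, 0 ≤ a ∧ 0 ≤ b ∧ 0 ≤ c ∧
      x t - x s = a • w 0 + b • w 1 + c • w 2 := by
    intro t ht
    have hmem : x t - x s ∈ U := by
      refine mem_iUnion₂.mpr ⟨x t, subset_convexHull ℝ _ (mem_image_of_mem x ht),
        ⟨1, zero_le_one, (one_smul _ _).symm⟩⟩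
    have := Heq ▸ (subset_closure hmem)
    exact this
  have hwi : w i ∈ closure U := by
    rw [Heq]
    fin_cases i
    · exact ⟨1, 0, 0, zero_le_one, le_refl 0, le_refl 0, by simp⟩
    · exact ⟨0, 1, 0, le_refl 0, zero_le_one, le_refl 0, by simp⟩
    · exact ⟨0, 0, 1, le_refl 0, le_refl 0, zero_le_one, by simp⟩
  obtain ⟨z, hzU, hzd⟩ := Metric.mem_closure_iff.mp hwi (δ / 2) (by linarith)
  obtain ⟨y, hyH, hzy⟩ := mem_iUnion₂.mp hzU
  obtain ⟨r, hr0, rfl⟩ := hzy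
  set z := r • (y - x s) with hzdef
  set Y := y - x s with hYdef
  -- inner products of z with the w's
  have hznear : ‖z - w i‖ < δ / 2 := by
    rw [← dist_eq_norm, dist_comm]
    exact hzd
  have hzi : 1 - δ / 2 ≤ ⟪z, w i⟫ := by
    have hii := hw i i
    rw [if_pos rfl] at hii
    have hdecomp : ⟪z, w i⟫ = ⟪z - w i, w i⟫ + ⟪w i, w i⟫ := by
      rw [← inner_add_left]; congr 1; abel
    have habs : |⟪z - w i, w i⟫| ≤ ‖z - w i‖ * ‖w i‖ := abs_real_inner_le_norm _ _
    rw [sdc_wnorm hw i, mul_one] at habs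
    have := abs_le.mp habs
    rw [hdecomp, hii]
    linarith [this.1, hznear]
  have hzj : ∀ j, j ≠ i → ⟪z, w j⟫ ≤ δ / 2 := by
    intro j hj
    have hij := hw i j
    rw [if_neg (fun h => hj h.symm)] at hij
    have hdecomp : ⟪z, w j⟫ = ⟪z - w i, w j⟫ + ⟪w i, w j⟫ := by
      rw [← inner_add_left]; congr 1; abel
    have habs : |⟪z - w i, w j⟫| ≤ ‖z - w i‖ * ‖w j‖ := abs_real_inner_le_norm _ _
    rw [sdc_wnorm hw j, mul_one] at habs
    have := abs_le.mp habs
    rw [hdecomp, hij]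
    linarith [this.2, hznear]
  have hz0 : z ≠ 0 := by
    intro h
    rw [h] at hzi
    simp only [inner_zero_left] at hzi
    linarith
  have hrpos : 0 < r := by
    rcases eq_or_lt_of_le hr0 with rfl | h
    · exfalso; apply hz0; rw [hzdef, zero_smul]
    · exact h
  have hY0 : Y ≠ 0 := by
    intro h
    apply hz0
    rw [hzdef, h, smul_zero]
  -- contradiction setup
  by_contra hcon
  push_neg at hcon
  -- hull representation of y
  rw [convexHull_eq] at hyH
  obtain ⟨ι, T, lam, zf, hlam0, hlam1, hzf, hyc⟩ := hyH
  set q : ι → E3 := fun a => zf a - x s with hqdef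
  have hYsum : Y = ∑ a ∈ T, lam a • q a := by
    have : ∑ a ∈ T, lam a • q a
        = (∑ a ∈ T, lam a • zf a) - (∑ a ∈ T, lam a) • x s := by
      rw [Finset.sum_smul, ← Finset.sum_sub_distrib]
      congr 1; ext a; rw [hqdef]; rw [smul_sub]
    rw [this, hlam1, one_smul, hYdef, ← hyc,
      Finset.centerMass_eq_of_sum_1 _ _ hlam1]
  -- coordinates of Y as sums
  have hYcoord : ∀ u : E3, ⟪Y, u⟫ = ∑ a ∈ T, lam a * ⟪q a, u⟫ := by
    intro u
    rw [hYsum, sum_inner]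
    congr 1; ext a; rw [real_inner_smul_left]
  -- membership facts for each a ∈ T
  have hqmem : ∀ a ∈ T, ∃ ta ∈ Icc (0:ℝ) s, x ta = zf a := by
    intro a ha
    obtain ⟨ta, hta, hxa⟩ := hzf a ha
    exact ⟨ta, hta, hxa⟩
  have hqcoord : ∀ a ∈ T, (0 ≤ ⟪q a, w 0⟫ ∧ 0 ≤ ⟪q a, w 1⟫ ∧ 0 ≤ ⟪q a, w 2⟫) ∧
      ‖q a‖ ≤ ⟪q a, w 0⟫ + ⟪q a, w 1⟫ + ⟪q a, w 2⟫ := by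
    intro a ha
    obtain ⟨ta, hta, hxa⟩ := hqmem a ha
    have hmem := hsec ta hta
    rw [hxa] at hmem
    exact ⟨sdc_coord_nonneg hw hmem, sdc_norm_le_coordsum hw hmem⟩
  have hqlt : ∀ a ∈ T, q a ≠ 0 → ⟪q a, w i⟫ < (1 - 5 * δ) * ‖q a‖ := by
    intro a ha hne
    obtain ⟨ta, hta, hxa⟩ := hqmem a ha
    have hxne : x ta ≠ x s := by
      intro h
      apply hne
      rw [hqdef]; simp only
      rw [← hxa, h, sub_self]
    have := hcon ta hta hxne
    rw [hxa] at this
    exact this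
  -- S1 := ∑ lam a * ‖q a‖
  set S1 := ∑ a ∈ T, lam a * ‖q a‖ with hS1def
  have hYnorm : ‖Y‖ ≤ S1 := by
    rw [hYsum]
    refine (norm_sum_le _ _).trans ?_
    rw [hS1def]
    apply Finset.sum_le_sum
    intro a ha
    rw [norm_smul, Real.norm_eq_abs, abs_of_nonneg (hlam0 a ha)]
  have hYpos : 0 < ‖Y‖ := norm_pos_iff.mpr hY0
  have hS1pos : 0 < S1 := lt_of_lt_of_le hYpos hYnorm
  -- exists positive term
  have hex : ∃ a ∈ T, 0 < lam a * ‖q a‖ := by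
    by_contra hno
    push_neg at hno
    have : S1 ≤ 0 := Finset.sum_nonpos (fun a ha => hno a ha)
    linarith
  obtain ⟨a0, ha0T, ha0pos⟩ := hex
  have hlam0pos : 0 < lam a0 := by
    rcases eq_or_lt_of_le (hlam0 a0 ha0T) with h | h
    · exfalso; rw [← h, zero_mul] at ha0pos; exact lt_irrefl 0 ha0pos
    · exact h
  have hq0ne : q a0 ≠ 0 := by
    intro h
    rw [h, norm_zero, mul_zero] at ha0pos
    exact lt_irrefl 0 ha0pos
  -- strict sum bound
  have hstrict : ⟪Y, w i⟫ < (1 - 5 * δ) * S1 := by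
    rw [hYcoord (w i), hS1def, Finset.mul_sum]
    apply Finset.sum_lt_sum
    · intro a ha
      rcases eq_or_ne (q a) 0 with h | h
      · rw [h]; simp
      · have := le_of_lt (hqlt a ha h)
        calc lam a * ⟪q a, w i⟫ ≤ lam a * ((1 - 5 * δ) * ‖q a‖) :=
              mul_le_mul_of_nonneg_left this (hlam0 a ha)
          _ = (1 - 5 * δ) * (lam a * ‖q a‖) := by ring
    · refine ⟨a0, ha0T, ?_⟩
      calc lam a0 * ⟪q a0, w i⟫ < lam a0 * ((1 - 5 * δ) * ‖q a0‖) :=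
            mul_lt_mul_of_pos_left (hqlt a0 ha0T hq0ne) hlam0pos
        _ = (1 - 5 * δ) * (lam a0 * ‖q a0‖) := by ring
  -- S1 ≤ coordinate sum of Y
  have hS1le : S1 ≤ ⟪Y, w 0⟫ + ⟪Y, w 1⟫ + ⟪Y, w 2⟫ := by
    rw [hYcoord (w 0), hYcoord (w 1), hYcoord (w 2), ← Finset.sum_add_distrib,
      ← Finset.sum_add_distrib, hS1def]
    apply Finset.sum_le_sum
    intro a ha
    have h1 := (hqcoord a ha).2
    have := mul_le_mul_of_nonneg_left h1 (hlam0 a ha)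
    calc lam a * ‖q a‖ ≤ lam a * (⟪q a, w 0⟫ + ⟪q a, w 1⟫ + ⟪q a, w 2⟫) := this
      _ = lam a * ⟪q a, w 0⟫ + lam a * ⟪q a, w 1⟫ + lam a * ⟪q a, w 2⟫ := by ring
  -- coordinates of Y are nonnegative
  have hYnonneg : ∀ j, 0 ≤ ⟪Y, w j⟫ := by
    intro j
    have h3 : ∀ a ∈ T, (0:ℝ) ≤ lam a * ⟪q a, w j⟫ := by
      intro a ha
      have hc := (hqcoord a ha).1
      have : 0 ≤ ⟪q a, w j⟫ := by
        fin_cases j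
        · exact hc.1
        · exact hc.2.1
        · exact hc.2.2
      exact mul_nonneg (hlam0 a ha) this
    rw [hYcoord (w j)]
    exact Finset.sum_nonneg h3
  -- transfer to z (multiply by r)
  have hzcoord : ∀ u : E3, ⟪z, u⟫ = r * ⟪Y, u⟫ := by
    intro u; rw [hzdef, real_inner_smul_left]
  have hzlt : ⟪z, w i⟫ < (1 - 5 * δ) * (⟪z, w 0⟫ + ⟪z, w 1⟫ + ⟪z, w 2⟫) := by
    rw [hzcoord (w i), hzcoord (w 0), hzcoord (w 1), hzcoord (w 2)]
    have h5 : 0 ≤ 1 - 5 * δ := by linarith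
    have hYlt : ⟪Y, w i⟫ < (1 - 5 * δ) * (⟪Y, w 0⟫ + ⟪Y, w 1⟫ + ⟪Y, w 2⟫) :=
      lt_of_lt_of_le hstrict (mul_le_mul_of_nonneg_left hS1le h5)
    calc r * ⟪Y, w i⟫ < r * ((1 - 5 * δ) * (⟪Y, w 0⟫ + ⟪Y, w 1⟫ + ⟪Y, w 2⟫)) :=
          mul_lt_mul_of_pos_left hYlt hrpos
      _ = (1 - 5 * δ) * (r * ⟪Y, w 0⟫ + r * ⟪Y, w 1⟫ + r * ⟪Y, w 2⟫) := by ring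
  -- final numeric contradiction
  have hi : i = 0 ∨ i = 1 ∨ i = 2 := by fin_cases i <;> simp
  have hzother : ⟪z, w 0⟫ + ⟪z, w 1⟫ + ⟪z, w 2⟫ ≤ ⟪z, w i⟫ + δ := by
    rcases hi with rfl | rfl | rfl
    · have h1 := hzj 1 (by decide)
      have h2 := hzj 2 (by decide)
      linarith
    · have h1 := hzj 0 (by decide)
      have h2 := hzj 2 (by decide)
      linarith
    · have h1 := hzj 0 (by decide)
      have h2 := hzj 1 (by decide)
      linarith
  have hznn : ∀ j, 0 ≤ ⟪z, w j⟫ := by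
    intro j
    rw [hzcoord (w j)]
    exact mul_nonneg hr0 (hYnonneg j)
  have hA := hzi
  nlinarith [hzlt, hzother, hA, hznn 0, hznn 1, hznn 2, hδ0, hδ1]

lemma sdc_lipschitz_decay (G : ℝ → ℝ) (C : NNReal) (hG : LipschitzWith C G)
    {t s : ℝ} (hts : t ≤ s) (Gd : ℝ → ℝ) (c : ℝ)
    (hae : ∀ᵐ σ ∂(volume.restrict (Ioo t s)), HasDerivAt G (Gd σ) σ ∧ Gd σ ≤ c) :
    G s - G t ≤ c * (s - t) := by
  rcases eq_or_lt_of_le hts with rfl | hlt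
  · simp
  have hGc : Continuous G := hG.continuous
  set μ := volume.restrict (Ioo t s) with hμdef
  haveI : IsFiniteMeasure μ := by
    constructor
    rw [hμdef, Measure.restrict_apply_univ]
    exact measure_Ioo_lt_top
  set h : ℕ → ℝ := fun n => 1 / ((n : ℝ) + 1) with hhdef
  have hhpos : ∀ n, 0 < h n := fun n => by positivity
  have hh1 : ∀ n, h n * ((n:ℝ) + 1) = 1 := fun n => by
    rw [hhdef]; field_simp
  set F : ℕ → ℝ → ℝ := fun n σ => (G (σ + h n) - G σ) * ((n:ℝ) + 1) with hFdef
  have hFbd : ∀ n σ, |F n σ| ≤ (C : ℝ) := by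
    intro n σ
    rw [hFdef]
    simp only
    rw [abs_mul]
    have h1 : |G (σ + h n) - G σ| ≤ (C:ℝ) * h n := by
      have h2 := hG.dist_le_mul (σ + h n) σ
      rw [Real.dist_eq, Real.dist_eq] at h2
      have h3 : |σ + h n - σ| = h n := by
        rw [add_sub_cancel_left, abs_of_pos (hhpos n)]
      rw [h3] at h2
      exact h2
    have h4 : |((n:ℝ) + 1)| = ((n:ℝ) + 1) := abs_of_pos (by positivity)
    rw [h4]
    calc |G (σ + h n) - G σ| * ((n:ℝ) + 1) ≤ ((C:ℝ) * h n) * ((n:ℝ) + 1) := by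
          apply mul_le_mul_of_nonneg_right h1 (by positivity)
      _ = (C:ℝ) * (h n * ((n:ℝ) + 1)) := by ring
      _ = (C:ℝ) := by rw [hh1 n, mul_one]
  have hconv : ∀ᵐ σ ∂μ, Filter.Tendsto (fun n => F n σ) atTop (𝓝 (Gd σ)) := by
    filter_upwards [hae] with σ hσ
    have hd := hσ.1
    rw [hasDerivAt_iff_tendsto_slope] at hd
    have hseq : Filter.Tendsto (fun n => σ + h n) atTop (𝓝[≠] σ) := by
      rw [tendsto_nhdsWithin_iff]
      constructor
      · have h5 : Filter.Tendsto h atTop (𝓝 0) := tendsto_one_div_add_atTop_nhds_zero_nat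
        have := tendsto_const_nhds (x := σ) (f := (atTop : Filter ℕ)) |>.add h5
        simpa using this
      · exact Filter.Eventually.of_forall (fun n => by
          simp only [mem_compl_iff, mem_singleton_iff]
          have := hhpos n
          intro hcontra
          nlinarith [hhpos n, congrArg (fun r => r - σ) hcontra])
    have hcomp := hd.comp hseq
    apply hcomp.congr
    intro n
    rw [Function.comp_apply, slope_def_field]
    rw [add_sub_cancel_left]
    rw [div_eq_mul_inv, hhdef]
    simp only
    rw [one_div, inv_inv]
    simp only [hFdef, hhdef, one_div]
  have hFmeas : ∀ n, AEStronglyMeasurable (F n) μ := by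
    intro n
    have : Continuous (F n) := by
      rw [hFdef]
      exact ((hGc.comp (continuous_id.add continuous_const)).sub hGc).mul continuous_const
    exact this.aestronglyMeasurable
  have hGdbd : ∀ᵐ σ ∂μ, |Gd σ| ≤ (C:ℝ) := by
    filter_upwards [hconv] with σ hσ
    have habs : Filter.Tendsto (fun n => |F n σ|) atTop (𝓝 |Gd σ|) := hσ.abs
    exact le_of_tendsto habs (Filter.Eventually.of_forall (fun n => hFbd n σ))
  have hGdmeas : AEMeasurable Gd μ :=
    aemeasurable_of_tendsto_metrizable_ae atTop (fun n => (hFmeas n).aemeasurable) hconv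
  have hGdint : Integrable Gd μ := by
    refine Integrable.mono' (integrable_const (C:ℝ)) hGdmeas.aestronglyMeasurable ?_
    filter_upwards [hGdbd] with σ hσ
    rw [Real.norm_eq_abs]
    exact hσ
  have hdct : Filter.Tendsto (fun n => ∫ σ, F n σ ∂μ) atTop (𝓝 (∫ σ, Gd σ ∂μ)) :=
    tendsto_integral_of_dominated_convergence (fun _ => (C:ℝ)) hFmeas (integrable_const _)
      (fun n => Filter.Eventually.of_forall (fun σ => by
        rw [Real.norm_eq_abs]; exact hFbd n σ)) hconv
  -- compute ∫ F n
  have hμint : ∀ n, ∫ σ, F n σ ∂μ = ∫ σ in t..s, F n σ := by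
    intro n
    rw [intervalIntegral.integral_of_le (le_of_lt hlt), integral_Ioc_eq_integral_Ioo]
  set A : ℕ → ℝ := fun n => ∫ σ in s..(s + h n), (G σ - G s) with hAdef
  set B : ℕ → ℝ := fun n => ∫ σ in t..(t + h n), (G σ - G t) with hBdef
  have key : ∀ n, ∫ σ in t..s, F n σ = (G s - G t) + (A n - B n) * ((n:ℝ) + 1) := by
    intro n
    have h1 : ∫ σ in t..s, F n σ = (∫ σ in t..s, (G (σ + h n) - G σ)) * ((n:ℝ) + 1) := by
      rw [hFdef]
      exact intervalIntegral.integral_mul_const _ _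
    have h2 : ∫ σ in t..s, (G (σ + h n) - G σ)
        = (∫ σ in t..s, G (σ + h n)) - ∫ σ in t..s, G σ :=
      intervalIntegral.integral_sub
        ((hGc.comp (continuous_id.add continuous_const)).intervalIntegrable _ _)
        (hGc.intervalIntegrable _ _)
    have h3 : ∫ σ in t..s, G (σ + h n) = ∫ σ in (t + h n)..(s + h n), G σ :=
      intervalIntegral.integral_comp_add_right _ _
    have h4 : (∫ σ in (t + h n)..s, G σ) + ∫ σ in s..(s + h n), G σ
        = ∫ σ in (t + h n)..(s + h n), G σ :=
      intervalIntegral.integral_add_adjacent_intervals (hGc.intervalIntegrable _ _)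
        (hGc.intervalIntegrable _ _)
    have h5 : (∫ σ in t..(t + h n), G σ) + ∫ σ in (t + h n)..s, G σ
        = ∫ σ in t..s, G σ :=
      intervalIntegral.integral_add_adjacent_intervals (hGc.intervalIntegrable _ _)
        (hGc.intervalIntegrable _ _)
    have hA' : A n = (∫ σ in s..(s + h n), G σ) - h n * G s := by
      rw [hAdef]
      simp only
      rw [intervalIntegral.integral_sub (hGc.intervalIntegrable _ _)
        intervalIntegrable_const, intervalIntegral.integral_const]
      simp [smul_eq_mul]
    have hB' : B n = (∫ σ in t..(t + h n), G σ) - h n * G t := by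
      rw [hBdef]
      simp only
      rw [intervalIntegral.integral_sub (hGc.intervalIntegrable _ _)
        intervalIntegrable_const, intervalIntegral.integral_const]
      simp [smul_eq_mul]
    have hgoal : (∫ σ in t..s, F n σ)
        = ((∫ σ in s..(s + h n), G σ) - (∫ σ in t..(t + h n), G σ)) * ((n:ℝ) + 1) := by
      rw [h1, h2, h3, ← h4, ← h5]
      ring
    rw [hgoal, hA', hB']
    linear_combination (G s - G t) * hh1 n
  have hAbd : ∀ n, |A n| ≤ (C:ℝ) * h n * h n := by
    intro n
    rw [hAdef]
    simp only
    have hb : ∀ σ ∈ Set.uIoc s (s + h n), ‖G σ - G s‖ ≤ (C:ℝ) * h n := by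
      intro σ hσ
      rw [uIoc_of_le (by linarith [hhpos n])] at hσ
      rw [Real.norm_eq_abs]
      have h2 := hG.dist_le_mul σ s
      rw [Real.dist_eq, Real.dist_eq] at h2
      refine h2.trans ?_
      have : |σ - s| ≤ h n := by
        rw [abs_of_nonneg (by linarith [hσ.1])]
        linarith [hσ.2]
      exact mul_le_mul_of_nonneg_left this (by positivity)
    have := intervalIntegral.norm_integral_le_of_norm_le_const hb
    rw [Real.norm_eq_abs] at this
    refine this.trans ?_
    have : |s + h n - s| = h n := by
      rw [add_sub_cancel_left, abs_of_pos (hhpos n)]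
    rw [this]
  have hBbd : ∀ n, |B n| ≤ (C:ℝ) * h n * h n := by
    intro n
    rw [hBdef]
    simp only
    have hb : ∀ σ ∈ Set.uIoc t (t + h n), ‖G σ - G t‖ ≤ (C:ℝ) * h n := by
      intro σ hσ
      rw [uIoc_of_le (by linarith [hhpos n])] at hσ
      rw [Real.norm_eq_abs]
      have h2 := hG.dist_le_mul σ t
      rw [Real.dist_eq, Real.dist_eq] at h2
      refine h2.trans ?_
      have : |σ - t| ≤ h n := by
        rw [abs_of_nonneg (by linarith [hσ.1])]
        linarith [hσ.2]
      exact mul_le_mul_of_nonneg_left this (by positivity)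
    have := intervalIntegral.norm_integral_le_of_norm_le_const hb
    rw [Real.norm_eq_abs] at this
    refine this.trans ?_
    have : |t + h n - t| = h n := by
      rw [add_sub_cancel_left, abs_of_pos (hhpos n)]
    rw [this]
  have herr : Filter.Tendsto (fun n => (A n - B n) * ((n:ℝ) + 1)) atTop (𝓝 0) := by
    refine squeeze_zero_norm (a := fun n => 2 * (C:ℝ) * h n) (fun n => ?_) ?_
    · rw [Real.norm_eq_abs, abs_mul]
      have h4 : |((n:ℝ) + 1)| = ((n:ℝ) + 1) := abs_of_pos (by positivity)
      rw [h4]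
      have h5 : |A n - B n| ≤ 2 * ((C:ℝ) * h n * h n) := by
        have := abs_sub (A n) (B n)
        calc |A n - B n| ≤ |A n| + |B n| := abs_sub _ _
          _ ≤ 2 * ((C:ℝ) * h n * h n) := by linarith [hAbd n, hBbd n]
      calc |A n - B n| * ((n:ℝ) + 1) ≤ (2 * ((C:ℝ) * h n * h n)) * ((n:ℝ) + 1) :=
            mul_le_mul_of_nonneg_right h5 (by positivity)
        _ = 2 * (C:ℝ) * h n * (h n * ((n:ℝ) + 1)) := by ring
        _ = 2 * (C:ℝ) * h n := by rw [hh1 n, mul_one]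
    · have h5 : Filter.Tendsto h atTop (𝓝 0) := tendsto_one_div_add_atTop_nhds_zero_nat
      have h6 := h5.const_mul (2 * (C:ℝ))
      rw [mul_zero] at h6
      exact h6
  have hlim2 : Filter.Tendsto (fun n => ∫ σ, F n σ ∂μ) atTop (𝓝 (G s - G t)) := by
    have : (fun n => ∫ σ, F n σ ∂μ)
        = fun n => (G s - G t) + (A n - B n) * ((n:ℝ) + 1) := by
      funext n
      rw [hμint n, key n]
    rw [this]
    have := (tendsto_const_nhds (x := G s - G t) (f := (atTop : Filter ℕ))).add herr
    simpa using this
  have heq : ∫ σ, Gd σ ∂μ = G s - G t := tendsto_nhds_unique hdct hlim2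
  have hle : ∫ σ, Gd σ ∂μ ≤ ∫ _, c ∂μ := by
    apply integral_mono_ae hGdint (integrable_const c)
    filter_upwards [hae] with σ hσ
    exact hσ.2
  rw [heq] at hle
  rw [integral_const] at hle
  have hμuniv : (μ univ).toReal = s - t := by
    rw [hμdef, Measure.restrict_apply_univ, Real.volume_Ioo,
      ENNReal.toReal_ofReal (by linarith)]
  rw [measureReal_def, hμuniv, smul_eq_mul] at hle
  linarith

lemma sdc_secant_slope {x : ℝ → E3} {τ s : ℝ} (h : τ < s) (hu : x τ - x s ≠ 0) :
    ‖x τ - x s‖⁻¹ • (x τ - x s) = -(‖slope x s τ‖⁻¹ • slope x s τ) := by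
  have hslope : slope x s τ = (τ - s)⁻¹ • (x τ - x s) := by
    rw [slope_def_module]
  have ha : τ - s < 0 := by linarith
  have hane : τ - s ≠ 0 := ne_of_lt ha
  have hnu : ‖x τ - x s‖ ≠ 0 := norm_ne_zero_iff.mpr hu
  rw [hslope, norm_smul, Real.norm_eq_abs, abs_inv, abs_of_neg ha, smul_smul, ← neg_smul]
  congr 1
  field_simp

/-- for a steepest descent curve in ℝ³ in arclength
parametrization, the tangent cone to `co(γ(s))` at `x(s)` cannot be an orthant
at any point where `x'(s)` exists. -/
theorem tangent_cone_not_orthant (L : ℝ) (hL : 0 < L)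
    (x xd : ℝ → EuclideanSpace ℝ (Fin 3))
    (hlip : LipschitzOnWith 1 x (Icc 0 L))
    (harc : ∀ᵐ s ∂(volume.restrict (Icc 0 L)),
      HasDerivWithinAt x (xd s) (Icc 0 L) s ∧ ‖xd s‖ = 1)
    (hsd : ∀ t' ∈ Icc (0:ℝ) L, ∀ t'' ∈ Icc (0:ℝ) L, ∀ t''' ∈ Icc (0:ℝ) L,
      t' ≤ t'' → t'' ≤ t''' → ‖x t' - x t''‖ ≤ ‖x t' - x t'''‖)
    (s : ℝ) (hs : s ∈ Icc (0:ℝ) L)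
    (v : EuclideanSpace ℝ (Fin 3)) (hv : HasDerivWithinAt x v (Icc 0 L) s) :
    ¬ ∃ w : Fin 3 → EuclideanSpace ℝ (Fin 3),
        (∀ i j, ⟪w i, w j⟫ = if i = j then (1 : ℝ) else 0) ∧
        closure (⋃ y ∈ convexHull ℝ (x '' Icc 0 s),
            {z : EuclideanSpace ℝ (Fin 3) | ∃ r : ℝ, 0 ≤ r ∧ z = r • (y - x s)})
          = {z : EuclideanSpace ℝ (Fin 3) | ∃ a b c : ℝ, 0 ≤ a ∧ 0 ≤ b ∧ 0 ≤ c ∧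
              z = a • w 0 + b • w 1 + c • w 2} := by
  rintro ⟨w, hw, Heq⟩
  obtain ⟨hs0, hsL⟩ := hs
  rw [hasDerivWithinAt_iff_tendsto_slope] at hv
  -- close secant directions for each axis (at accuracy 1/24)
  have hT : ∀ j : Fin 3, ∃ tj ∈ Icc (0:ℝ) s, x tj ≠ x s ∧
      ‖‖x tj - x s‖⁻¹ • (x tj - x s) - w j‖ ≤ 1 / 24 := by
    intro j
    obtain ⟨tj, htj, hne, hineq⟩ := sdc_pigeonhole hw Heq j
      (δ := 1 / 5760) (by norm_num) (by norm_num)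
    refine ⟨tj, htj, hne, ?_⟩
    have hineq' : (1 - 1 / 1152) * ‖x tj - x s‖ ≤ ⟪x tj - x s, w j⟫ := by
      have heq5 : (1 : ℝ) - 5 * (1 / 5760) = 1 - 1 / 1152 := by norm_num
      rw [← heq5]
      exact hineq
    have h2 := sdc_normalized_close (sub_ne_zero_of_ne hne) (sdc_wnorm hw j) hineq'
    nlinarith [norm_nonneg (‖x tj - x s‖⁻¹ • (x tj - x s) - w j)]
  obtain ⟨t0, ht0I, ht0ne, ht0cl⟩ := hT 0
  obtain ⟨t1, ht1I, ht1ne, ht1cl⟩ := hT 1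
  obtain ⟨t2, ht2I, ht2ne, ht2cl⟩ := hT 2
  have ht0lt : t0 < s := lt_of_le_of_ne ht0I.2 (fun h => ht0ne (by rw [h]))
  have ht1lt : t1 < s := lt_of_le_of_ne ht1I.2 (fun h => ht1ne (by rw [h]))
  have ht2lt : t2 < s := lt_of_le_of_ne ht2I.2 (fun h => ht2ne (by rw [h]))
  set ρ : ℝ := min ‖x t0 - x s‖ (min ‖x t1 - x s‖ ‖x t2 - x s‖) with hρdef
  have hρpos : 0 < ρ := by
    apply lt_min (norm_pos_iff.mpr (sub_ne_zero_of_ne ht0ne))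
    exact lt_min (norm_pos_iff.mpr (sub_ne_zero_of_ne ht1ne))
      (norm_pos_iff.mpr (sub_ne_zero_of_ne ht2ne))
  have hρ0 : ρ ≤ ‖x t0 - x s‖ := min_le_left _ _
  have hρ1 : ρ ≤ ‖x t1 - x s‖ := le_trans (min_le_right _ _) (min_le_left _ _)
  have hρ2 : ρ ≤ ‖x t2 - x s‖ := le_trans (min_le_right _ _) (min_le_right _ _)
  set T0 : ℝ := max (max t0 t1) (max t2 (s - ρ / 24)) with hT0def
  have hT0ge0 : 0 ≤ T0 := le_trans ht0I.1 (le_trans (le_max_left t0 t1) (le_max_left _ _))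
  have hT0lt : T0 < s :=
    max_lt (max_lt ht0lt ht1lt) (max_lt ht2lt (by linarith))
  have ht0T0 : t0 ≤ T0 := le_trans (le_max_left t0 t1) (le_max_left _ _)
  have ht1T0 : t1 ≤ T0 := le_trans (le_max_right t0 t1) (le_max_left _ _)
  have ht2T0 : t2 ≤ T0 := le_trans (le_max_left t2 _) (le_max_right _ _)
  have hsρT0 : s - ρ / 24 ≤ T0 := le_trans (le_max_right t2 _) (le_max_right _ _)
  set W : E3 := w 0 + w 1 + w 2 with hWdef
  have hWnorm : ‖W‖ ≤ 3 := by
    calc ‖W‖ ≤ ‖w 0 + w 1‖ + ‖w 2‖ := norm_add_le _ _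
      _ ≤ ‖w 0‖ + ‖w 1‖ + ‖w 2‖ := by linarith [norm_add_le (w 0) (w 1)]
      _ = 3 := by rw [sdc_wnorm hw 0, sdc_wnorm hw 1, sdc_wnorm hw 2]; norm_num
  set clamp : ℝ → ℝ := fun σ => max T0 (min σ s) with hclampdef
  have hclamp_mem : ∀ σ, clamp σ ∈ Icc (0:ℝ) L := by
    intro σ
    constructor
    · exact le_trans hT0ge0 (le_max_left _ _)
    · apply max_le (by linarith)
      exact le_trans (min_le_right σ s) hsL
  have hclamp_eq : ∀ σ, T0 ≤ σ → σ ≤ s → clamp σ = σ := by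
    intro σ h1 h2
    rw [hclampdef]
    simp only
    rw [min_eq_left h2, max_eq_right h1]
  have hclamp_lip : ∀ a b : ℝ, |clamp a - clamp b| ≤ |a - b| := by
    intro a b
    rw [hclampdef]
    simp only
    refine le_trans (abs_max_sub_max_le_max _ _ _ _) ?_
    rw [sub_self, abs_zero]
    refine max_le (by positivity) ?_
    refine le_trans (abs_min_sub_min_le_max _ _ _ _) ?_
    rw [sub_self, abs_zero]
    exact max_le (le_refl _) (abs_nonneg _)
  set G : ℝ → ℝ := fun σ => ⟪x (clamp σ), W⟫ with hGdef
  have hGlip : LipschitzWith 3 G := by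
    apply LipschitzWith.of_dist_le_mul
    intro a b
    rw [hGdef]
    simp only
    rw [Real.dist_eq]
    have hdiff : ⟪x (clamp a), W⟫ - ⟪x (clamp b), W⟫ = ⟪x (clamp a) - x (clamp b), W⟫ := by
      rw [inner_sub_left]
    rw [hdiff]
    have habs : |⟪x (clamp a) - x (clamp b), W⟫| ≤ ‖x (clamp a) - x (clamp b)‖ * ‖W‖ :=
      abs_real_inner_le_norm _ _
    refine habs.trans ?_
    have hxd : ‖x (clamp a) - x (clamp b)‖ ≤ |a - b| := by
      have h9 := hlip.dist_le_mul (clamp a) (hclamp_mem a) (clamp b) (hclamp_mem b)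
      rw [dist_eq_norm, Real.dist_eq] at h9
      simp only [NNReal.coe_one, one_mul] at h9
      exact h9.trans (hclamp_lip a b)
    calc ‖x (clamp a) - x (clamp b)‖ * ‖W‖ ≤ |a - b| * 3 := by
          apply mul_le_mul hxd hWnorm (norm_nonneg _) (abs_nonneg _)
      _ = 3 * dist a b := by rw [Real.dist_eq]; ring
  set Gd : ℝ → ℝ := fun σ => ⟪xd σ, W⟫ with hGddef
  -- the a.e. differential inequality on (T0, s)
  have hae0 : ∀ᵐ σ ∂(volume.restrict (Ioo T0 s)),
      HasDerivAt G (Gd σ) σ ∧ Gd σ ≤ -(1/2) := by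
    have hsub : Ioo T0 s ⊆ Icc (0:ℝ) L := fun y hy =>
      ⟨by linarith [hy.1], by linarith [hy.2]⟩
    have harc' := ae_restrict_of_ae_restrict_of_subset hsub harc
    have hmemae : ∀ᵐ σ ∂(volume.restrict (Ioo T0 s)), σ ∈ Ioo T0 s :=
      ae_restrict_mem measurableSet_Ioo
    filter_upwards [harc', hmemae] with σ hgood hσmem
    obtain ⟨hd, hn1⟩ := hgood
    obtain ⟨hσ1, hσ2⟩ := hσmem
    have hnbhd : Icc (0:ℝ) L ∈ 𝓝 σ := Icc_mem_nhds (by linarith) (by linarith)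
    have hxat : HasDerivAt x (xd σ) σ := hd.hasDerivAt hnbhd
    constructor
    · have hinner : HasDerivAt (fun y => ⟪x y, W⟫) (⟪x σ, (0:E3)⟫ + ⟪xd σ, W⟫) σ :=
        hxat.inner ℝ (hasDerivAt_const σ W)
      rw [inner_zero_right, zero_add] at hinner
      have hev : G =ᶠ[𝓝 σ] fun y => ⟪x y, W⟫ := by
        have hIoo : Ioo T0 s ∈ 𝓝 σ := Ioo_mem_nhds hσ1 hσ2
        refine Filter.eventuallyEq_of_mem hIoo (fun y hy => ?_)
        rw [hGdef]
        simp only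
        rw [hclamp_eq y (le_of_lt hy.1) (le_of_lt hy.2)]
      exact hinner.congr_of_eventuallyEq hev
    · have hcoord : ∀ (j : Fin 3) (tj : ℝ), 0 ≤ tj → tj ≤ T0 → x tj ≠ x s →
          ρ ≤ ‖x tj - x s‖ →
          ‖‖x tj - x s‖⁻¹ • (x tj - x s) - w j‖ ≤ 1/24 →
          ⟪xd σ, w j⟫ ≤ 1/12 := by
        intro j tj htj0 htjT0 htjne hρj htjcl
        set u : E3 := x tj - x s with hudef
        have hune : u ≠ 0 := sub_ne_zero_of_ne htjne
        have hupos : 0 < ‖u‖ := norm_pos_iff.mpr hune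
        have hsplit : ⟪xd σ, w j⟫
            = ⟪xd σ, w j - ‖u‖⁻¹ • u⟫ + ⟪xd σ, ‖u‖⁻¹ • u⟫ := by
          rw [← inner_add_right]
          congr 1
          abel
        have hb1 : ⟪xd σ, w j - ‖u‖⁻¹ • u⟫ ≤ 1/24 := by
          have hcs := abs_real_inner_le_norm (xd σ) (w j - ‖u‖⁻¹ • u)
          rw [hn1, one_mul] at hcs
          have h2 : ‖w j - ‖u‖⁻¹ • u‖ = ‖‖u‖⁻¹ • u - w j‖ := norm_sub_rev _ _
          have h3 := (le_abs_self _).trans hcs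
          rw [h2] at h3
          exact h3.trans htjcl
        have hb2 : ⟪xd σ, ‖u‖⁻¹ • u⟫ ≤ 1/24 := by
          rw [real_inner_smul_right]
          have hiu : ⟪xd σ, u⟫ ≤ ρ / 24 := by
            have hdecomp : ⟪xd σ, u⟫ = ⟪xd σ, x tj - x σ⟫ + ⟪xd σ, x σ - x s⟫ := by
              rw [← inner_add_right]
              congr 1
              rw [hudef]; abel
            have hpast : ⟪xd σ, x tj - x σ⟫ ≤ 0 := by
              have h4 := sdc_deriv_inner_nonneg hsd htj0 (by linarith : tj ≤ σ)
                (by linarith : σ ≤ s) hsL hd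
              have hflip : x tj - x σ = -(x σ - x tj) := by abel
              rw [hflip, inner_neg_right]
              linarith
            have hnear : ⟪xd σ, x σ - x s⟫ ≤ ρ / 24 := by
              have hcs := abs_real_inner_le_norm (xd σ) (x σ - x s)
              rw [hn1, one_mul] at hcs
              have hdist : ‖x σ - x s‖ ≤ s - σ := by
                have h5 := hlip.dist_le_mul σ ⟨by linarith, by linarith⟩ s ⟨hs0, hsL⟩
                rw [dist_eq_norm, Real.dist_eq] at h5
                simp only [NNReal.coe_one, one_mul] at h5
                rw [abs_of_nonpos (by linarith)] at h5
                linarith [h5]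
              have hσρ : s - σ ≤ ρ / 24 := by linarith
              have h6 := (le_abs_self _).trans hcs
              linarith
            linarith
          have h7 : ‖u‖⁻¹ * ⟪xd σ, u⟫ ≤ ‖u‖⁻¹ * (ρ / 24) :=
            mul_le_mul_of_nonneg_left hiu (by positivity)
          refine h7.trans ?_
          have h8 : ‖u‖⁻¹ * (ρ / 24) ≤ ‖u‖⁻¹ * (‖u‖ / 24) := by
            apply mul_le_mul_of_nonneg_left _ (by positivity)
            linarith
          refine h8.trans ?_
          rw [show ‖u‖⁻¹ * (‖u‖ / 24) = 1/24 by field_simp]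
        linarith [hsplit, hb1, hb2]
      have hc0 : ⟪xd σ, w 0⟫ ≤ 1/12 := hcoord 0 t0 ht0I.1 ht0T0 ht0ne hρ0 ht0cl
      have hc1 : ⟪xd σ, w 1⟫ ≤ 1/12 := hcoord 1 t1 ht1I.1 ht1T0 ht1ne hρ1 ht1cl
      have hc2 : ⟪xd σ, w 2⟫ ≤ 1/12 := hcoord 2 t2 ht2I.1 ht2T0 ht2ne hρ2 ht2cl
      have hpar : ⟪xd σ, w 0⟫^2 + ⟪xd σ, w 1⟫^2 + ⟪xd σ, w 2⟫^2 = 1 := by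
        have h9 := (sdc_parseval hw (xd σ)).symm
        rw [hn1, one_pow] at h9
        exact h9
      have hsum := sdc_sum_coord_neg hpar hc0 hc1 hc2
      have hGdexp : Gd σ = ⟪xd σ, w 0⟫ + ⟪xd σ, w 1⟫ + ⟪xd σ, w 2⟫ := by
        rw [hGddef]
        simp only
        rw [hWdef, inner_add_right, inner_add_right]
      rw [hGdexp]
      linarith
  -- quantitative chord lower bound near s
  have hdecay : ∀ t', T0 ≤ t' → t' < s → (s - t') / 6 ≤ ‖x t' - x s‖ := by
    intro t' h1 h2
    have hsub2 : Ioo t' s ⊆ Ioo T0 s := fun y hy => ⟨by linarith [hy.1], hy.2⟩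
    have hae' := ae_restrict_of_ae_restrict_of_subset hsub2 hae0
    have hdec := sdc_lipschitz_decay G 3 hGlip (le_of_lt h2) Gd (-(1/2)) hae'
    have hGs : G s = ⟪x s, W⟫ := by
      rw [hGdef]; simp only; rw [hclamp_eq s (le_of_lt hT0lt) (le_refl s)]
    have hGt : G t' = ⟪x t', W⟫ := by
      rw [hGdef]; simp only; rw [hclamp_eq t' h1 (le_of_lt h2)]
    rw [hGs, hGt] at hdec
    have hdiff2 : ⟪x s, W⟫ - ⟪x t', W⟫ = -⟪x t' - x s, W⟫ := by
      rw [inner_sub_left]; ring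
    rw [hdiff2] at hdec
    have hip : (s - t') / 2 ≤ ⟪x t' - x s, W⟫ := by nlinarith [hdec]
    have hub : ⟪x t' - x s, W⟫ ≤ ‖x t' - x s‖ * 3 := by
      have hcs := abs_real_inner_le_norm (x t' - x s) W
      have h10 := (le_abs_self _).trans hcs
      have h11 : ‖x t' - x s‖ * ‖W‖ ≤ ‖x t' - x s‖ * 3 :=
        mul_le_mul_of_nonneg_left hWnorm (norm_nonneg _)
      linarith
    linarith
  -- the derivative is nonzero
  have hvnorm : (1:ℝ)/6 ≤ ‖v‖ := by
    set tn : ℕ → ℝ := fun n => s - (s - T0)/((n:ℝ)+1) with htndef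
    have htnprop : ∀ n : ℕ, T0 ≤ tn n ∧ tn n < s := by
      intro n
      constructor
      · rw [htndef]
        simp only
        have hn1' : (1:ℝ) ≤ (n:ℝ) + 1 := by
          have h00 : (0:ℝ) ≤ (n:ℝ) := Nat.cast_nonneg n
          linarith
        have h12 : (s - T0)/((n:ℝ)+1) ≤ s - T0 :=
          div_le_self (by linarith) hn1'
        linarith
      · rw [htndef]
        simp only
        have h13 : 0 < (s - T0)/((n:ℝ)+1) := by
          apply div_pos (by linarith)
          have h00 : (0:ℝ) ≤ (n:ℝ) := Nat.cast_nonneg n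
          linarith
        linarith
    have hseq : Filter.Tendsto tn atTop (𝓝[Icc 0 L \ {s}] s) := by
      rw [tendsto_nhdsWithin_iff]
      constructor
      · have h7 : Filter.Tendsto (fun n : ℕ => (s - T0)/((n:ℝ)+1)) atTop (𝓝 0) := by
          have h14 := tendsto_one_div_add_atTop_nhds_zero_nat.const_mul (s - T0)
          rw [mul_zero] at h14
          refine h14.congr (fun n => ?_)
          rw [mul_one_div]
        have h6 : Filter.Tendsto (fun n : ℕ => s - (s - T0)/((n:ℝ)+1)) atTop (𝓝 (s - 0)) :=
          tendsto_const_nhds.sub h7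
        rw [sub_zero] at h6
        exact h6
      · apply Filter.Eventually.of_forall
        intro n
        obtain ⟨ha, hb⟩ := htnprop n
        refine ⟨⟨by linarith, by linarith⟩, ?_⟩
        simp only [mem_singleton_iff]
        intro hcontra
        linarith [hb, hcontra.ge, hcontra.le]
    have hcomp := hv.comp hseq
    have hlow : ∀ n, (1:ℝ)/6 ≤ ‖slope x s (tn n)‖ := by
      intro n
      obtain ⟨ha, hb⟩ := htnprop n
      have hd6 := hdecay (tn n) ha hb
      rw [slope_def_module, norm_smul, Real.norm_eq_abs, abs_inv,
        abs_of_neg (by linarith : tn n - s < 0)]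
      rw [show -(tn n - s) = s - tn n by ring]
      have hpos : 0 < s - tn n := by linarith
      rw [inv_mul_eq_div, le_div_iff₀ hpos]
      calc 1/6 * (s - tn n) = (s - tn n)/6 := by ring
        _ ≤ ‖x (tn n) - x s‖ := hd6
    exact le_of_tendsto_of_tendsto' tendsto_const_nhds hcomp.norm hlow
  have hvne : v ≠ 0 := by
    intro h
    rw [h, norm_zero] at hvnorm
    linarith
  set Q : E3 := -(‖v‖⁻¹ • v) with hQdef
  have hQnorm : ‖Q‖ = 1 := by
    rw [hQdef, norm_neg]
    exact norm_smul_inv_norm (𝕜 := ℝ) hvne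
  -- dichotomy for each axis direction
  have hdich : ∀ i : Fin 3,
      (∃ T, 0 ≤ T ∧ T < s ∧ x T ≠ x s ∧ w i = ‖x T - x s‖⁻¹ • (x T - x s)) ∨ w i = Q := by
    intro i
    have hseqex : ∀ k : ℕ, ∃ t', (t' ∈ Icc (0:ℝ) s ∧ x t' ≠ x s) ∧
        (1 - (1:ℝ)/((k:ℝ)+1)) * ‖x t' - x s‖ ≤ ⟪x t' - x s, w i⟫ := by
      intro k
      have hk1 : (0:ℝ) < 5 * ((k:ℝ)+1) := by positivity
      have hk2 : 1/(5*((k:ℝ)+1)) ≤ 1/5 := by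
        have hk0 : (0:ℝ) ≤ (k:ℝ) := Nat.cast_nonneg k
        have h5k : (5:ℝ) ≤ 5*((k:ℝ)+1) := by nlinarith
        exact one_div_le_one_div_of_le (by norm_num) h5k
      obtain ⟨t', h1, h2, h3⟩ := sdc_pigeonhole hw Heq i
        (δ := 1/(5*((k:ℝ)+1))) (by positivity) hk2
      refine ⟨t', ⟨h1, h2⟩, ?_⟩
      have heq6 : 5 * (1/(5*((k:ℝ)+1))) = 1/((k:ℝ)+1) := by
        field_simp
      rw [← heq6]
      exact h3
    choose tk htkprop htkcl using hseqex
    have htkI : ∀ k, tk k ∈ Icc (0:ℝ) s := fun k => (htkprop k).1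
    have htkne : ∀ k, x (tk k) ≠ x s := fun k => (htkprop k).2
    obtain ⟨T, hTmem, φ, hφmono, hφtend⟩ :=
      (isCompact_Icc (a := (0:ℝ)) (b := s)).tendsto_subseq htkI
    have hlower : Filter.Tendsto (fun m => 1 - 1/((φ m : ℝ)+1)) atTop (𝓝 1) := by
      have h15 : Filter.Tendsto (fun m => 1/((φ m : ℝ)+1)) atTop (𝓝 0) :=
        tendsto_one_div_add_atTop_nhds_zero_nat.comp hφmono.tendsto_atTop
      have h16 := (tendsto_const_nhds (x := (1:ℝ)) (f := (atTop : Filter ℕ))).sub h15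
      rw [sub_zero] at h16
      exact h16
    have hgei : ∀ m, 1 - 1/((φ m : ℝ)+1)
        ≤ ⟪‖x (tk (φ m)) - x s‖⁻¹ • (x (tk (φ m)) - x s), w i⟫ := fun m =>
      sdc_normalized_inner_ge (sub_ne_zero_of_ne (htkne (φ m))) (htkcl (φ m))
    rcases eq_or_lt_of_le hTmem.2 with hTs | hTs
    · -- limit point is s : direction is Q
      right
      have htklt : ∀ m, tk (φ m) < s := fun m =>
        lt_of_le_of_ne (htkI (φ m)).2 (fun h => htkne (φ m) (by rw [h]))
      have hmemseq : Filter.Tendsto (fun m => tk (φ m)) atTop (𝓝[Icc 0 L \ {s}] s) := by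
        rw [tendsto_nhdsWithin_iff]
        constructor
        · rw [← hTs]
          exact hφtend
        · apply Filter.Eventually.of_forall
          intro m
          refine ⟨⟨(htkI (φ m)).1, by linarith [(htkI (φ m)).2]⟩, ?_⟩
          simp only [mem_singleton_iff]
          exact ne_of_lt (htklt m)
      have hslopet := hv.comp hmemseq
      have hQlim : Filter.Tendsto
          (fun m => ‖x (tk (φ m)) - x s‖⁻¹ • (x (tk (φ m)) - x s)) atTop (𝓝 Q) := by
        have hconv2 : Filter.Tendsto
            (fun m => -(‖slope x s (tk (φ m))‖⁻¹ • slope x s (tk (φ m)))) atTop (𝓝 Q) := by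
          rw [hQdef]
          exact (((hslopet.norm.inv₀ (norm_ne_zero_iff.mpr hvne)).smul hslopet).neg)
        apply hconv2.congr
        intro m
        exact (sdc_secant_slope (htklt m)
          (sub_ne_zero_of_ne (htkne (φ m)))).symm
      have hinner2 : Filter.Tendsto
          (fun m => ⟪‖x (tk (φ m)) - x s‖⁻¹ • (x (tk (φ m)) - x s), w i⟫) atTop
          (𝓝 ⟪Q, w i⟫) := hQlim.inner tendsto_const_nhds
      have h1le : 1 ≤ ⟪Q, w i⟫ :=
        le_of_tendsto_of_tendsto' hlower hinner2 hgei
      exact (sdc_unit_eq hQnorm (sdc_wnorm hw i) h1le).symm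
    · -- limit point is interior : true secant direction
      left
      have hTne : x T ≠ x s := sdc_ne_endpoint harc hsd hTmem.1 hTs hsL
      have hxcont : Filter.Tendsto (fun m => x (tk (φ m))) atTop (𝓝 (x T)) := by
        have hTL : T ∈ Icc (0:ℝ) L := ⟨hTmem.1, by linarith [hTmem.2]⟩
        have hcont := (hlip.continuousOn.continuousWithinAt hTL).tendsto
        apply hcont.comp
        rw [tendsto_nhdsWithin_iff]
        refine ⟨hφtend, Filter.Eventually.of_forall (fun m => ?_)⟩
        exact ⟨(htkI (φ m)).1, by linarith [(htkI (φ m)).2]⟩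
      have husub : Filter.Tendsto (fun m => x (tk (φ m)) - x s) atTop (𝓝 (x T - x s)) :=
        hxcont.sub tendsto_const_nhds
      have hTu : x T - x s ≠ 0 := sub_ne_zero_of_ne hTne
      have hnormt : Filter.Tendsto
          (fun m => ‖x (tk (φ m)) - x s‖⁻¹ • (x (tk (φ m)) - x s)) atTop
          (𝓝 (‖x T - x s‖⁻¹ • (x T - x s))) :=
        (husub.norm.inv₀ (norm_ne_zero_iff.mpr hTu)).smul husub
      have hinner3 : Filter.Tendsto
          (fun m => ⟪‖x (tk (φ m)) - x s‖⁻¹ • (x (tk (φ m)) - x s), w i⟫) atTop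
          (𝓝 ⟪‖x T - x s‖⁻¹ • (x T - x s), w i⟫) := hnormt.inner tendsto_const_nhds
      have h1le : 1 ≤ ⟪‖x T - x s‖⁻¹ • (x T - x s), w i⟫ :=
        le_of_tendsto_of_tendsto' hlower hinner3 hgei
      exact ⟨T, hTmem.1, hTs, hTne,
        (sdc_unit_eq (norm_smul_inv_norm (𝕜 := ℝ) hTu) (sdc_wnorm hw i) h1le).symm⟩
  -- two secants are impossible, two Q's are impossible
  have hsecpair : ∀ i j : Fin 3, i ≠ j →
      (∃ T, 0 ≤ T ∧ T < s ∧ x T ≠ x s ∧ w i = ‖x T - x s‖⁻¹ • (x T - x s)) →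
      (∃ T, 0 ≤ T ∧ T < s ∧ x T ≠ x s ∧ w j = ‖x T - x s‖⁻¹ • (x T - x s)) → False := by
    intro i j hij ⟨Ti, hTi0, hTis, hTine, hwieq⟩ ⟨Tj, hTj0, hTjs, hTjne, hwjeq⟩
    have horth : ⟪w i, w j⟫ = 0 := by
      have := hw i j
      rw [if_neg hij] at this
      exact this
    have hipos : 0 < ⟪x Ti - x s, x Tj - x s⟫ := by
      rcases le_total Ti Tj with hle | hle
      · exact sdc_acute hsd hTi0 hle (le_of_lt hTjs) hsL hTjne
      · rw [real_inner_comm]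
        exact sdc_acute hsd hTj0 hle (le_of_lt hTis) hsL hTine
    have hcomp : ⟪w i, w j⟫
        = ‖x Ti - x s‖⁻¹ * (‖x Tj - x s‖⁻¹ * ⟪x Ti - x s, x Tj - x s⟫) := by
      rw [hwieq, hwjeq, real_inner_smul_left, real_inner_smul_right]
    rw [horth] at hcomp
    have hi1 : 0 < ‖x Ti - x s‖⁻¹ := by
      have := norm_pos_iff.mpr (sub_ne_zero_of_ne hTine)
      positivity
    have hj1 : 0 < ‖x Tj - x s‖⁻¹ := by
      have := norm_pos_iff.mpr (sub_ne_zero_of_ne hTjne)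
      positivity
    exact (ne_of_gt (mul_pos hi1 (mul_pos hj1 hipos))) hcomp.symm
  have hQpair : ∀ i j : Fin 3, i ≠ j → w i = Q → w j = Q → False := by
    intro i j hij hwi hwj
    have horth : ⟪w i, w j⟫ = 0 := by
      have := hw i j
      rw [if_neg hij] at this
      exact this
    rw [hwi, hwj, real_inner_self_eq_norm_sq, hQnorm] at horth
    norm_num at horth
  rcases hdich 0 with h0 | h0 <;> rcases hdich 1 with h1 | h1 <;> rcases hdich 2 with h2 | h2
  · exact hsecpair 0 1 (by decide) h0 h1
  · exact hsecpair 0 1 (by decide) h0 h1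
  · exact hsecpair 0 2 (by decide) h0 h2
  · exact hQpair 1 2 (by decide) h1 h2
  · exact hsecpair 1 2 (by decide) h1 h2
  · exact hQpair 0 2 (by decide) h0 h2
  · exact hQpair 0 1 (by decide) h0 h1
  · exact hQpair 0 1 (by decide) h0 h1
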